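/- Let B be a subposet of NC(P) isomorphic to Bool(n−1), where P is an n-point hull configuration. Then the edges corresponding to the n−1 atoms of B form a noncrossing spanning tree τ on P with convex geodesics, and B = Bool(τ). -/

import Mathlib

open scoped Classical

/-- The vertex type of a finite point configuration `P ⊆ ℂ`. -/
abbrev Vtx (P : Finset ℂ) := {z : ℂ // z ∈ P}

/-- The block (as a set of points of the plane) of the partition `s` containing `a`. -/
def cblock {P : Finset ℂ} (s : Setoid (Vtx P)) (a : Vtx P) : Set ℂ :=
  {w : ℂ | ∃ b : Vtx P, s.r a b ∧ w = ↑b}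

/-- A partition (setoid) of the points of `P` is noncrossing if the convex hulls of
distinct blocks are pairwise disjoint. -/
def NoncrossingS (P : Finset ℂ) (s : Setoid (Vtx P)) : Prop :=
  ∀ a b : Vtx P, ¬ s.r a b →
    Disjoint (convexHull ℝ (cblock s a)) (convexHull ℝ (cblock s b))

/-- `P` is a hull configuration: no point of `P` lies in the interior of the convex hull
(this includes the degenerate case of a collinear configuration, whose hull has empty
interior). -/
def IsHullConfig (P : Finset ℂ) : Prop :=
  ∀ z ∈ P, z ∉ interior (convexHull ℝ (↑P : Set ℂ))

/-- The number of blocks of a partition of the points of `P`. -/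
noncomputable def numBlocks {P : Finset ℂ} (s : Setoid (Vtx P)) : ℕ :=
  Set.ncard {C : Set (Vtx P) | ∃ a, C = {b | s.r a b}}

/-- The rank of a partition in `NC(P)`: `|P|` minus the number of blocks. -/
noncomputable def rkNC {P : Finset ℂ} (s : Setoid (Vtx P)) : ℕ := P.card - numBlocks s

/-- The partition of the points of `P` into connected components of the graph `H`. -/
def partOf {P : Finset ℂ} (H : SimpleGraph (Vtx P)) : Setoid (Vtx P) :=
  ⟨fun a b => H.Reachable a b,
   ⟨fun a => SimpleGraph.Reachable.refl a, fun h => h.symm, fun h h' => h.trans h'⟩⟩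

/-- `Bool(τ)`: the set of partitions `Part(μ)` of subforests (subgraphs) `μ ⊆ τ`. -/
def boolOf {P : Finset ℂ} (G : SimpleGraph (Vtx P)) : Set (Setoid (Vtx P)) :=
  {s | ∃ H ≤ G, s = partOf H}

/-- The straight-line edges of `G` are pairwise noncrossing: two distinct edges meet
at most in common endpoints. -/
def EdgesNoncrossing (P : Finset ℂ) (G : SimpleGraph (Vtx P)) : Prop :=
  ∀ a b c d : Vtx P, G.Adj a b → G.Adj c d →
    ({a, b} : Set (Vtx P)) ≠ {c, d} →
    ∀ x ∈ segment ℝ (a : ℂ) (b : ℂ) ∩ segment ℝ (c : ℂ) (d : ℂ),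
      (x = ↑a ∨ x = ↑b) ∧ (x = ↑c ∨ x = ↑d)

/-- `G` has convex geodesics: for every connected subgraph (subtree), the convex hull of
its vertices contains no points of `P` other than those vertices. -/
def ConvexGeodesics (P : Finset ℂ) (G : SimpleGraph (Vtx P)) : Prop :=
  ∀ S : Set (Vtx P), (G.induce S).Connected →
    ∀ v : Vtx P, (v : ℂ) ∈ convexHull ℝ (Subtype.val '' S) → v ∈ S

/-- A noncrossing (spanning) tree on `P` with convex geodesics. -/
def IsNCTree (P : Finset ℂ) (G : SimpleGraph (Vtx P)) : Prop :=
  G.IsTree ∧ EdgesNoncrossing P G ∧ ConvexGeodesics P G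

set_option linter.unusedSectionVars false
set_option linter.unusedVariables false
set_option maxHeartbeats 1000000

section SetoidCount

variable {α : Type*} [Finite α]

noncomputable def nB (s : Setoid α) : ℕ := Nat.card (Quotient s)

/-- the canonical surjection between quotients -/
def qmap {s t : Setoid α} (h : s ≤ t) : Quotient s → Quotient t :=
  Quotient.map' id (fun _ _ hab => h hab)

lemma qmap_surj {s t : Setoid α} (h : s ≤ t) : Function.Surjective (qmap h) := by
  intro q
  obtain ⟨a⟩ := q
  exact ⟨Quotient.mk'' a, rfl⟩

lemma qmap_mk {s t : Setoid α} (h : s ≤ t) (a : α) :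
    qmap h (Quotient.mk'' a) = Quotient.mk'' a := rfl

lemma nB_anti {s t : Setoid α} (h : s ≤ t) : nB t ≤ nB s :=
  Nat.card_le_card_of_surjective _ (qmap_surj h)

lemma eq_of_le_of_nB_le {s t : Setoid α} (h : s ≤ t) (hc : nB s ≤ nB t) : s = t := by
  have hbij : Function.Bijective (qmap h) :=
    (Nat.bijective_iff_surjective_and_card _).2 ⟨qmap_surj h, le_antisymm hc (nB_anti h)⟩
  refine le_antisymm h ?_
  intro a b hab
  have : qmap h (Quotient.mk'' a) = qmap h (Quotient.mk'' b) := by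
    rw [qmap_mk, qmap_mk]
    exact Quotient.sound' hab
  have := hbij.1 this
  exact Quotient.exact' this

lemma nB_strict_anti {s t : Setoid α} (h : s < t) : nB t < nB s := by
  rcases lt_or_ge (nB t) (nB s) with h' | h'
  · exact h'
  · exact absurd (eq_of_le_of_nB_le h.le (le_trans h' (le_refl _))) h.ne

lemma nB_le_card (s : Setoid α) : nB s ≤ Nat.card α :=
  Nat.card_le_card_of_surjective _ (Quotient.mk''_surjective)

lemma one_le_nB [Nonempty α] (s : Setoid α) : 1 ≤ nB s := by
  have : Nonempty (Quotient s) := ⟨Quotient.mk'' (Classical.arbitrary α)⟩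
  exact Nat.card_pos

lemma nB_bot : nB (⊥ : Setoid α) = Nat.card α := by
  refine (Nat.card_eq_of_bijective (Quotient.mk'' : α → Quotient ⊥) ⟨?_, Quotient.mk''_surjective⟩).symm
  intro a b hab
  have := Quotient.exact' hab
  have hb : (⊥ : Setoid α) a b := this
  rwa [show ((⊥ : Setoid α) : α → α → Prop) = (· = ·) from Setoid.bot_def] at hb

lemma eq_bot_of_nB {s : Setoid α} (h : nB s = Nat.card α) : s = ⊥ := by
  refine (eq_of_le_of_nB_le bot_le ?_).symm
  rw [h, nB_bot]

lemma eq_top_of_nB [Nonempty α] {s : Setoid α} (h : nB s = 1) : s = ⊤ := by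
  refine eq_of_le_of_nB_le le_top ?_
  rw [h]
  exact one_le_nB _

end SetoidCount
set_option maxHeartbeats 1000000

section PairS

variable {α : Type*}

/-- the partition with one doubleton block `{u,v}` and all other blocks singletons -/
def pairS (u v : α) : Setoid α :=
  ⟨fun x y => x = y ∨ (x = u ∧ y = v) ∨ (x = v ∧ y = u),
   ⟨fun _ => Or.inl rfl, by tauto, by
      rintro x y z (rfl | ⟨rfl, rfl⟩ | ⟨rfl, rfl⟩) (h | h | h) <;> tauto⟩⟩

lemma pairS_rel {u v x y : α} :
    pairS u v x y ↔ x = y ∨ (x = u ∧ y = v) ∨ (x = v ∧ y = u) := Iff.rfl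

lemma pairS_rel' (u v : α) : pairS u v u v := Or.inr (Or.inl ⟨rfl, rfl⟩)

lemma pairS_comm (u v : α) : pairS u v = pairS v u := by
  refine Setoid.ext fun x y => ?_
  simp only [pairS_rel]; tauto

lemma pairS_le {u v : α} {t : Setoid α} (h : t u v) : pairS u v ≤ t := by
  intro x y hxy
  rcases hxy with rfl | ⟨rfl, rfl⟩ | ⟨rfl, rfl⟩
  · exact t.refl' x
  · exact h
  · exact t.symm' h

lemma pairS_ne_bot {u v : α} (h : u ≠ v) : pairS u v ≠ ⊥ := by
  intro hb
  have : (⊥ : Setoid α) u v := hb ▸ pairS_rel' u v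
  have : u = v := by rwa [show ((⊥ : Setoid α) : α → α → Prop) = (· = ·) from Setoid.bot_def] at this
  exact h this

/-- a setoid with exactly one merge is a pair setoid -/
lemma eq_pairS_of_nB [Finite α] {s : Setoid α} (hs : s ≠ ⊥)
    (hc : nB s = Nat.card α - 1) : ∃ u v, u ≠ v ∧ s = pairS u v := by
  have hex : ∃ u v, u ≠ v ∧ s u v := by
    by_contra h
    push_neg at h
    apply hs
    refine le_antisymm ?_ bot_le
    intro x y hxy
    have : ((⊥ : Setoid α) : α → α → Prop) = (· = ·) := Setoid.bot_def
    rw [this]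
    by_contra hne
    exact (h x y hne) hxy
  obtain ⟨u, v, huv, hrel⟩ := hex
  refine ⟨u, v, huv, ?_⟩
  have hle : pairS u v ≤ s := pairS_le hrel
  have h1 : nB s ≤ nB (pairS u v) := nB_anti hle
  have h2 : nB (pairS u v) < Nat.card α := by
    have : (⊥ : Setoid α) < pairS u v := lt_of_le_of_ne bot_le (Ne.symm (pairS_ne_bot huv))
    have := nB_strict_anti this
    rwa [nB_bot] at this
  have : Nonempty α := ⟨u⟩
  have hpos : 1 ≤ Nat.card α := Nat.card_pos
  have : nB (pairS u v) ≤ nB s := by omega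
  exact (eq_of_le_of_nB_le hle this).symm

end PairS

section Graphs

variable {α : Type*}

/-- graph on `α` whose edges are `{u i, v i}` for `i ∈ S` -/
def GSgen {k : ℕ} (u v : Fin k → α) (huv : ∀ i, u i ≠ v i) (S : Finset (Fin k)) :
    SimpleGraph α where
  Adj a b := ∃ i ∈ S, (a = u i ∧ b = v i) ∨ (a = v i ∧ b = u i)
  symm := ⟨by rintro a b ⟨i, hi, (⟨rfl, rfl⟩ | ⟨rfl, rfl⟩)⟩ <;> exact ⟨i, hi, by tauto⟩⟩
  loopless := ⟨by
    rintro a ⟨i, hi, (⟨rfl, h⟩ | ⟨rfl, h⟩)⟩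
    · exact huv i h
    · exact huv i h.symm⟩

lemma GSgen_adj {k : ℕ} (u v : Fin k → α) (huv : ∀ i, u i ≠ v i) (S : Finset (Fin k))
    (a b : α) : (GSgen u v huv S).Adj a b ↔ ∃ i ∈ S, (a = u i ∧ b = v i) ∨ (a = v i ∧ b = u i) :=
  Iff.rfl

lemma GSgen_mono {k : ℕ} (u v : Fin k → α) (huv : ∀ i, u i ≠ v i) {S T : Finset (Fin k)}
    (h : S ⊆ T) : GSgen u v huv S ≤ GSgen u v huv T := by
  rintro a b ⟨i, hi, hp⟩
  exact ⟨i, h hi, hp⟩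

end Graphs

section PartOf

def partOf' {α : Type*} (H : SimpleGraph α) : Setoid α :=
  ⟨fun a b => H.Reachable a b,
   ⟨fun a => SimpleGraph.Reachable.refl a, fun h => h.symm, fun h h' => h.trans h'⟩⟩

variable {α : Type*}

lemma partOf'_rel {H : SimpleGraph α} {a b : α} : partOf' H a b ↔ H.Reachable a b := Iff.rfl

lemma partOf'_le_iff {H : SimpleGraph α} {t : Setoid α} :
    partOf' H ≤ t ↔ ∀ a b, H.Adj a b → t a b := by
  constructor
  · intro h a b hadj
    exact h (hadj.reachable : partOf' H a b)
  · intro h a b hr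
    obtain ⟨w⟩ := (hr : H.Reachable a b)
    induction w with
    | nil => exact t.refl' _
    | cons hadj p ih => exact t.trans' (h _ _ hadj) ih

lemma partOf'_mono {H H' : SimpleGraph α} (h : H ≤ H') : partOf' H ≤ partOf' H' :=
  partOf'_le_iff.2 fun _ _ hadj => ((h hadj).reachable : _)

lemma pairS_le_partOf' {H : SimpleGraph α} {a b : α} (h : H.Adj a b) :
    pairS a b ≤ partOf' H := pairS_le (h.reachable : partOf' H a b)

lemma partOf'_bot : partOf' (⊥ : SimpleGraph α) = ⊥ := by
  refine le_antisymm ?_ bot_le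
  rw [partOf'_le_iff]
  intro a b hadj
  exact absurd hadj (by simp)

end PartOf

lemma fourEqv {α : Type*} {a b c d : α} (hab : ¬ a = b) (hcd : ¬ c = d) (hac : ¬ a = c)
    (had : ¬ a = d) (hbc : ¬ b = c) (hbd : ¬ b = d) :
    Equivalence (fun x y : α =>
      x = y ∨ (x = a ∧ y = b) ∨ (x = b ∧ y = a) ∨ (x = c ∧ y = d) ∨ (x = d ∧ y = c)) := by
  constructor
  · exact fun _ => Or.inl rfl
  · rintro x y (rfl | ⟨rfl, rfl⟩ | ⟨rfl, rfl⟩ | ⟨rfl, rfl⟩ | ⟨rfl, rfl⟩) <;> tauto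
  · rintro x y z h1 h2
    rcases h1 with rfl | ⟨h1a, h1b⟩ | ⟨h1a, h1b⟩ | ⟨h1a, h1b⟩ | ⟨h1a, h1b⟩ <;>
      rcases h2 with rfl | ⟨h2a, h2b⟩ | ⟨h2a, h2b⟩ | ⟨h2a, h2b⟩ | ⟨h2a, h2b⟩ <;>
      subst_vars <;> simp_all

/-- Let `B` be a subposet of `NC(P)` isomorphic to `Bool(n-1)`, where `P` is an `n`-point
hull configuration.  Then there is a noncrossing spanning tree `τ` on `P` with convex
geodesics (formed by the edges corresponding to the `n-1` atoms of `B`) such that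
`B = Bool(τ)`. -/
theorem stmt17 (P : Finset ℂ) (hP : IsHullConfig P) (hn : 1 ≤ P.card)
    (B : Set (Setoid (Vtx P)))
    (hBnc : ∀ s ∈ B, NoncrossingS P s)
    (hBiso : Nonempty (↥B ≃o Finset (Fin (P.card - 1)))) :
    ∃ G : SimpleGraph (Vtx P), IsNCTree P G ∧ B = boolOf G := by
  classical
  obtain ⟨e⟩ := hBiso
  set m := P.card with hm
  set n' := m - 1 with hn'
  have hNE : Nonempty (Vtx P) := by
    obtain ⟨z0, hz0⟩ := Finset.card_pos.mp hn
    exact ⟨⟨z0, hz0⟩⟩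
  have hmcard : Nat.card (Vtx P) = m := by
    rw [Nat.card_eq_fintype_card, Fintype.card_coe]
  have hpeq : ∀ H : SimpleGraph (Vtx P), partOf H = partOf' H := fun _ => rfl
  -- the family of partitions indexed by the Boolean lattice
  let f : Finset (Fin n') → Setoid (Vtx P) := fun S => ((e.symm S : ↥B) : Setoid (Vtx P))
  have fmem : ∀ S, f S ∈ B := fun S => (e.symm S).2
  have fle : ∀ {S T : Finset (Fin n')}, S ⊆ T → f S ≤ f T := by
    intro S T h
    exact Subtype.coe_le_coe.2 (e.symm.monotone (Finset.le_iff_subset.2 h))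
  have fle_iff : ∀ {S T : Finset (Fin n')}, f S ≤ f T → S ⊆ T := by
    intro S T h
    exact Finset.le_iff_subset.1 (e.symm.le_iff_le.1 (Subtype.coe_le_coe.1 h))
  have finj : ∀ {S T : Finset (Fin n')}, f S = f T → S = T := by
    intro S T h
    exact e.symm.injective (Subtype.coe_injective h)
  have flt : ∀ {S T : Finset (Fin n')}, S ⊂ T → f S < f T := by
    intro S T h
    exact lt_of_le_of_ne (fle h.subset) (fun hEq => h.ne (finj hEq))
  have hcarduniv : (Finset.univ : Finset (Fin n')).card = n' := by
    rw [Finset.card_univ, Fintype.card_fin]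
  -- chain-length estimate
  have lemA : ∀ (d : ℕ) (S T : Finset (Fin n')), S ⊆ T → T.card = S.card + d →
      nB (f T) + d ≤ nB (f S) := by
    intro d
    induction d with
    | zero =>
      intro S T hST hcard
      have : S = T := Finset.eq_of_subset_of_card_le hST (by omega)
      subst this
      omega
    | succ d ih =>
      intro S T hST hcard
      have hne : S ≠ T := by intro h; subst h; omega
      obtain ⟨x, hxT, hxS⟩ := Finset.exists_of_ssubset (hST.ssubset_of_ne hne)
      have hsub' : S ⊆ T.erase x := Finset.subset_erase.2 ⟨hST, hxS⟩
      have hcard' : (T.erase x).card = S.card + d := by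
        rw [Finset.card_erase_of_mem hxT]; omega
      have h1 := ih S (T.erase x) hsub' hcard'
      have h2 : nB (f T) < nB (f (T.erase x)) :=
        nB_strict_anti (flt (Finset.erase_ssubset hxT))
      omega
  -- rank facts
  have hrk : ∀ S : Finset (Fin n'), nB (f S) + S.card = m := by
    intro S
    have hSC : S.card ≤ n' := by
      have h := Finset.card_le_univ S
      rwa [Fintype.card_fin] at h
    have h1 := lemA S.card ∅ S (Finset.empty_subset _) (by simp)
    have h2 := lemA (n' - S.card) S Finset.univ (Finset.subset_univ _)
      (by rw [hcarduniv]; omega)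
    have hb1 : nB (f ∅) ≤ m := by rw [← hmcard]; exact nB_le_card _
    have ht1 : 1 ≤ nB (f Finset.univ) := one_le_nB _
    omega
  have hbot : f ∅ = ⊥ := by
    apply eq_bot_of_nB
    have := hrk ∅
    rw [hmcard]
    simpa using this
  have htop : f Finset.univ = ⊤ := by
    apply eq_top_of_nB
    have := hrk Finset.univ
    rw [hcarduniv] at this
    omega
  -- atoms are pair partitions
  have hatom : ∀ i : Fin n', ∃ u0 v0 : Vtx P, u0 ≠ v0 ∧ f {i} = pairS u0 v0 := by
    intro i
    refine eq_pairS_of_nB ?_ ?_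
    · intro h
      have : ({i} : Finset (Fin n')) = ∅ := finj (h.trans hbot.symm)
      simp at this
    · have h1 := hrk {i}
      rw [Finset.card_singleton] at h1
      rw [hmcard]
      omega
  choose u v huv hpair using hatom
  -- the join formula
  have hsup : ∀ (S : Finset (Fin n')) (i : Fin n'), i ∉ S →
      f (insert i S) = f S ⊔ pairS (u i) (v i) := by
    intro S i hiS
    have hle1 : f S ≤ f (insert i S) := fle (Finset.subset_insert i S)
    have hle2 : pairS (u i) (v i) ≤ f (insert i S) := by
      rw [← hpair i]
      exact fle (Finset.singleton_subset_iff.2 (Finset.mem_insert_self i S))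
    have hub : f S ⊔ pairS (u i) (v i) ≤ f (insert i S) := sup_le hle1 hle2
    have hnr : ¬ (f S) (u i) (v i) := by
      intro h
      have h1 : f {i} ≤ f S := by rw [hpair i]; exact pairS_le h
      exact hiS (Finset.singleton_subset_iff.1 (fle_iff h1))
    have hlt : f S < f S ⊔ pairS (u i) (v i) := by
      refine lt_of_le_of_ne le_sup_left ?_
      intro hEq
      apply hnr
      have h2 : (f S ⊔ pairS (u i) (v i)) (u i) (v i) :=
        (le_sup_right : pairS (u i) (v i) ≤ f S ⊔ pairS (u i) (v i))
          (pairS_rel' (u i) (v i))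
      rwa [← hEq] at h2
    have e1 := hrk (insert i S)
    rw [Finset.card_insert_of_notMem hiS] at e1
    have e2 := hrk S
    have e3 := nB_strict_anti hlt
    exact (eq_of_le_of_nB_le hub (by omega)).symm
  -- partitions of subgraphs
  have hpar : ∀ S : Finset (Fin n'), partOf' (GSgen u v huv S) = f S := by
    intro S
    induction S using Finset.induction_on with
    | empty =>
      rw [hbot]
      refine le_antisymm ?_ bot_le
      rw [partOf'_le_iff]
      rintro a b ⟨i, hi, -⟩
      exact absurd hi (Finset.notMem_empty i)
    | @insert i S hiS ih =>
      refine le_antisymm ?_ ?_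
      · rw [partOf'_le_iff]
        rintro a b ⟨j, hj, hp⟩
        have hj' : f {j} ≤ f (insert i S) := fle (Finset.singleton_subset_iff.2 hj)
        refine hj' ?_
        have : (pairS (u j) (v j)) a b := by
          rcases hp with ⟨rfl, rfl⟩ | ⟨rfl, rfl⟩
          · exact pairS_rel' _ _
          · exact (pairS (u j) (v j)).symm' (pairS_rel' _ _)
        rw [hpair j]
        exact this
      · rw [hsup S i hiS]
        refine sup_le ?_ ?_
        · rw [← ih]
          exact partOf'_mono (GSgen_mono u v huv (Finset.subset_insert i S))
        · exact pairS_le_partOf' ⟨i, Finset.mem_insert_self i S, Or.inl ⟨rfl, rfl⟩⟩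
  set G : SimpleGraph (Vtx P) := GSgen u v huv Finset.univ with hG
  have hGtop : partOf' G = ⊤ := (hpar Finset.univ).trans htop
  have hreach : ∀ a b : Vtx P, G.Reachable a b := by
    intro a b
    have h1 : (⊤ : Setoid (Vtx P)) a b := by
      rw [Setoid.top_def]; trivial
    rw [← hGtop] at h1
    exact h1
  have hconn : G.Connected := by
    rw [SimpleGraph.connected_iff]
    exact ⟨fun a b => hreach a b, hNE⟩
  have hacyc : G.IsAcyclic := by
    rw [SimpleGraph.isAcyclic_iff_forall_adj_isBridge]
    intro a b hadj
    rw [SimpleGraph.isBridge_iff]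
    intro hre
    obtain ⟨i, -, hp⟩ := hadj
    have hle : (G \ SimpleGraph.fromEdgeSet {s(a, b)}) ≤ GSgen u v huv (Finset.univ.erase i) := by
      intro x y h
      rw [SimpleGraph.sdiff_adj] at h
      obtain ⟨j, -, hq⟩ := h.1
      refine ⟨j, Finset.mem_erase.2 ⟨?_, Finset.mem_univ j⟩, hq⟩
      rintro rfl
      apply h.2
      rw [SimpleGraph.fromEdgeSet_adj]
      refine ⟨?_, h.1.ne⟩
      rw [Set.mem_singleton_iff]
      rcases hq with ⟨rfl, rfl⟩ | ⟨rfl, rfl⟩ <;>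
        rcases hp with ⟨rfl, rfl⟩ | ⟨rfl, rfl⟩ <;>
        first | rfl | exact Sym2.eq_swap | exact Sym2.eq_swap.symm
    have hre' : (partOf' (GSgen u v huv (Finset.univ.erase i))) a b :=
      (partOf'_mono hle) (hre : partOf' (G \ SimpleGraph.fromEdgeSet {s(a, b)}) a b)
    rw [hpar] at hre'
    have hrel_uv : (f (Finset.univ.erase i)) (u i) (v i) := by
      rcases hp with ⟨rfl, rfl⟩ | ⟨rfl, rfl⟩
      · exact hre'
      · exact (f (Finset.univ.erase i)).symm' hre'
    have h1 : f {i} ≤ f (Finset.univ.erase i) := by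
      rw [hpair i]; exact pairS_le hrel_uv
    exact (Finset.notMem_erase i _) (Finset.singleton_subset_iff.1 (fle_iff h1))
  -- B = boolOf G
  have hBeq : B = boolOf G := by
    apply Set.eq_of_subset_of_subset
    · intro s hs
      refine ⟨GSgen u v huv (e ⟨s, hs⟩), GSgen_mono u v huv (Finset.subset_univ _), ?_⟩
      rw [hpeq, hpar]
      exact (congrArg (fun x : ↥B => (x : Setoid (Vtx P))) (e.symm_apply_apply ⟨s, hs⟩)).symm
    · rintro s ⟨H, hH, rfl⟩
      set S : Finset (Fin n') := Finset.univ.filter (fun i => H.Adj (u i) (v i)) with hS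
      have hHeq : H = GSgen u v huv S := by
        ext x y
        constructor
        · intro hxy
          obtain ⟨i, -, hq⟩ := hH hxy
          have hadj_i : H.Adj (u i) (v i) := by
            rcases hq with ⟨rfl, rfl⟩ | ⟨rfl, rfl⟩
            · exact hxy
            · exact hxy.symm
          exact ⟨i, Finset.mem_filter.2 ⟨Finset.mem_univ i, hadj_i⟩, hq⟩
        · rintro ⟨i, hi, hq⟩
          have hadj_i := (Finset.mem_filter.1 hi).2
          rcases hq with ⟨rfl, rfl⟩ | ⟨rfl, rfl⟩
          · exact hadj_i
          · exact hadj_i.symm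
      rw [hHeq, hpeq, hpar]
      exact fmem S
  -- atoms' edges avoid other points
  have hseg0 : ∀ (i : Fin n') (w : Vtx P), w ≠ u i → w ≠ v i →
      (w : ℂ) ∉ segment ℝ ((u i : ℂ)) ((v i : ℂ)) := by
    intro i w hwu hwv hmem
    have hnc := hBnc _ (fmem {i})
    have hnr : ¬ (f {i}).r w (u i) := by
      rw [hpair i]
      intro h
      have h' : w = u i ∨ (w = u i ∧ u i = v i) ∨ (w = v i ∧ u i = u i) := h
      rcases h' with h' | ⟨h', -⟩ | ⟨h', -⟩
      · exact hwu h'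
      · exact hwu h'
      · exact hwv h'
    have hcw : cblock (f {i}) w = {(w : ℂ)} := by
      ext z
      constructor
      · rintro ⟨b, hb, rfl⟩
        rw [hpair i] at hb
        have hb' : w = b ∨ (w = u i ∧ b = v i) ∨ (w = v i ∧ b = u i) := hb
        rcases hb' with rfl | ⟨h1, -⟩ | ⟨h1, -⟩
        · rfl
        · exact absurd h1 hwu
        · exact absurd h1 hwv
      · rintro rfl
        exact ⟨w, (f {i}).refl' w, rfl⟩
    have hcu : cblock (f {i}) (u i) = {((u i : ℂ)), ((v i : ℂ))} := by
      ext z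
      constructor
      · rintro ⟨b, hb, rfl⟩
        rw [hpair i] at hb
        have hb' : u i = b ∨ (u i = u i ∧ b = v i) ∨ (u i = v i ∧ b = u i) := hb
        rcases hb' with rfl | ⟨-, h1⟩ | ⟨h1, -⟩
        · exact Or.inl rfl
        · rw [h1]; exact Or.inr rfl
        · exact absurd h1 (huv i)
      · rintro (rfl | rfl)
        · exact ⟨u i, (f {i}).refl' (u i), rfl⟩
        · refine ⟨v i, ?_, rfl⟩
          rw [hpair i]
          exact pairS_rel' (u i) (v i)
    have hdisj := hnc w (u i) hnr
    rw [hcw, hcu, convexHull_singleton, convexHull_pair] at hdisj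
    exact Set.disjoint_left.1 hdisj rfl hmem
  have hseg : ∀ a b : Vtx P, G.Adj a b → ∀ w : Vtx P, w ≠ a → w ≠ b →
      (w : ℂ) ∉ segment ℝ ((a : ℂ)) ((b : ℂ)) := by
    rintro a b ⟨i, -, (⟨rfl, rfl⟩ | ⟨rfl, rfl⟩)⟩ w hwa hwb
    · exact hseg0 i w hwa hwb
    · rw [segment_symm]
      exact hseg0 i w hwb hwa
  -- two edges sharing an endpoint meet only there
  have hshare : ∀ p q r : Vtx P, G.Adj p q → G.Adj p r → q ≠ r →
      ∀ x : ℂ, x ∈ segment ℝ ((p : ℂ)) ((q : ℂ)) → x ∈ segment ℝ ((p : ℂ)) ((r : ℂ)) →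
      x = (p : ℂ) := by
    intro p q r hpq hpr hqr x hx1 hx2
    rw [segment_eq_image'] at hx1 hx2
    obtain ⟨s, hs, rfl⟩ := hx1
    obtain ⟨t, ht, hxe⟩ := hx2
    have key : t • ((r : ℂ) - (p : ℂ)) = s • ((q : ℂ) - (p : ℂ)) := add_left_cancel hxe
    rcases eq_or_lt_of_le hs.1 with hs0 | hs0
    · rw [← hs0]; simp
    rcases eq_or_lt_of_le ht.1 with ht0 | ht0
    · exfalso
      rw [← ht0, zero_smul] at key
      rcases smul_eq_zero.1 key.symm with h | h
      · exact hs0.ne' h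
      · exact hpq.ne' (Subtype.coe_injective (sub_eq_zero.1 h))
    exfalso
    rcases le_total t s with hts | hst
    · have hqd : (q : ℂ) - (p : ℂ) = (t / s) • ((r : ℂ) - (p : ℂ)) := by
        rw [div_eq_inv_mul, mul_smul, key, inv_smul_smul₀ hs0.ne']
      have hmemq : ((q : ℂ)) ∈ segment ℝ ((p : ℂ)) ((r : ℂ)) := by
        rw [segment_eq_image']
        refine ⟨t / s, ⟨div_nonneg ht.1 hs.1, (div_le_one hs0).2 hts⟩, ?_⟩
        show (p : ℂ) + (t / s) • ((r : ℂ) - (p : ℂ)) = (q : ℂ)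
        rw [← hqd]; ring
      exact hseg p r hpr q hpq.ne' hqr hmemq
    · have hrd : (r : ℂ) - (p : ℂ) = (s / t) • ((q : ℂ) - (p : ℂ)) := by
        rw [div_eq_inv_mul, mul_smul, ← key, inv_smul_smul₀ ht0.ne']
      have hmemr : ((r : ℂ)) ∈ segment ℝ ((p : ℂ)) ((q : ℂ)) := by
        rw [segment_eq_image']
        refine ⟨s / t, ⟨div_nonneg hs.1 ht.1, (div_le_one ht0).2 hst⟩, ?_⟩
        show (p : ℂ) + (s / t) • ((q : ℂ) - (p : ℂ)) = (r : ℂ)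
        rw [← hrd]; ring
      exact hseg p q hpq r hpr.ne' hqr.symm hmemr
  have hENC : EdgesNoncrossing P G := by
    intro a b c d hab hcd hne x hx
    obtain ⟨hx1, hx2⟩ := hx
    have hne1 : ¬(a = c ∧ b = d) := by rintro ⟨rfl, rfl⟩; exact hne rfl
    have hne2 : ¬(a = d ∧ b = c) := by rintro ⟨rfl, rfl⟩; exact hne (Set.pair_comm _ _)
    by_cases hac : a = c
    · subst hac
      have hbd : b ≠ d := fun h => hne1 ⟨rfl, h⟩
      have hxp := hshare a b d hab hcd hbd x hx1 hx2
      exact ⟨Or.inl hxp, Or.inl hxp⟩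
    by_cases had : a = d
    · subst had
      have hbc : b ≠ c := fun h => hne2 ⟨rfl, h⟩
      rw [segment_symm] at hx2
      have hxp := hshare a b c hab hcd.symm hbc x hx1 hx2
      exact ⟨Or.inl hxp, Or.inr hxp⟩
    by_cases hbc : b = c
    · subst hbc
      rw [segment_symm] at hx1
      have hxp := hshare b a d hab.symm hcd had x hx1 hx2
      exact ⟨Or.inr hxp, Or.inl hxp⟩
    by_cases hbd : b = d
    · subst hbd
      rw [segment_symm] at hx1 hx2
      have hxp := hshare b a c hab.symm hcd.symm hac x hx1 hx2
      exact ⟨Or.inr hxp, Or.inr hxp⟩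
    · exfalso
      have hab' : a ≠ b := hab.ne
      have hcd' : c ≠ d := hcd.ne
      obtain ⟨i, -, hpi⟩ := hab
      obtain ⟨j, -, hpj⟩ := hcd
      have hpa : pairS a b = f {i} := by
        rw [hpair i]
        rcases hpi with ⟨rfl, rfl⟩ | ⟨rfl, rfl⟩
        · rfl
        · exact pairS_comm _ _
      have hpc : pairS c d = f {j} := by
        rw [hpair j]
        rcases hpj with ⟨rfl, rfl⟩ | ⟨rfl, rfl⟩
        · rfl
        · exact pairS_comm _ _
      have hij : i ≠ j := by
        rintro rfl
        have h0 : (pairS a b) c d := by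
          rw [hpa, ← hpc]
          exact pairS_rel' c d
        have h0' : c = d ∨ (c = a ∧ d = b) ∨ (c = b ∧ d = a) := h0
        rcases h0' with h' | ⟨h1, -⟩ | ⟨h1, -⟩
        · exact hcd' h'
        · exact hac h1.symm
        · exact hbc h1.symm
      have heqv : Equivalence (fun x y : Vtx P =>
          x = y ∨ (x = a ∧ y = b) ∨ (x = b ∧ y = a) ∨ (x = c ∧ y = d) ∨ (x = d ∧ y = c)) :=
        fourEqv hab' hcd' hac had hbc hbd
      let t' : Setoid (Vtx P) := ⟨_, heqv⟩
      have htle : f ({i, j} : Finset (Fin n')) ≤ t' := by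
        rw [show ({i, j} : Finset (Fin n')) = insert i {j} from rfl,
          hsup {j} i (by simpa using hij)]
        refine sup_le ?_ ?_
        · rw [← hpc]
          exact pairS_le (Or.inr (Or.inr (Or.inr (Or.inl ⟨rfl, rfl⟩))))
        · rw [← hpair i, ← hpa]
          exact pairS_le (Or.inr (Or.inl ⟨rfl, rfl⟩))
      have hnr : ¬ (f ({i, j} : Finset (Fin n'))).r a c := by
        intro h
        have h' : a = c ∨ (a = a ∧ c = b) ∨ (a = b ∧ c = a) ∨ (a = c ∧ c = d) ∨
            (a = d ∧ c = c) := htle h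
        rcases h' with h' | ⟨-, h1⟩ | ⟨h1, -⟩ | ⟨h1, -⟩ | ⟨h1, -⟩
        · exact hac h'
        · exact hbc h1.symm
        · exact hab' h1
        · exact hac h1
        · exact had h1
      have hdisj := hBnc _ (fmem ({i, j} : Finset (Fin n'))) a c hnr
      have hrab : (f ({i, j} : Finset (Fin n'))).r a b := by
        have h1 : f {i} ≤ f ({i, j} : Finset (Fin n')) :=
          fle (Finset.singleton_subset_iff.2 (Finset.mem_insert_self i {j}))
        refine h1 ?_
        rw [← hpa]
        exact pairS_rel' a b
      have hrcd : (f ({i, j} : Finset (Fin n'))).r c d := by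
        have h1 : f {j} ≤ f ({i, j} : Finset (Fin n')) :=
          fle (Finset.singleton_subset_iff.2
            (Finset.mem_insert_of_mem (Finset.mem_singleton_self j)))
        refine h1 ?_
        rw [← hpc]
        exact pairS_rel' c d
      have hsub1 : segment ℝ ((a : ℂ)) ((b : ℂ)) ⊆
          convexHull ℝ (cblock (f ({i, j} : Finset (Fin n'))) a) := by
        rw [← convexHull_pair]
        apply convexHull_mono
        rintro z (rfl | rfl)
        · exact ⟨a, (f _).refl' a, rfl⟩
        · exact ⟨b, hrab, rfl⟩
      have hsub2 : segment ℝ ((c : ℂ)) ((d : ℂ)) ⊆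
          convexHull ℝ (cblock (f ({i, j} : Finset (Fin n'))) c) := by
        rw [← convexHull_pair]
        apply convexHull_mono
        rintro z (rfl | rfl)
        · exact ⟨c, (f _).refl' c, rfl⟩
        · exact ⟨d, hrcd, rfl⟩
      exact Set.disjoint_left.1 hdisj (hsub1 hx1) (hsub2 hx2)
  have hCG : ConvexGeodesics P G := by
    intro S hS v hv
    by_contra hvS
    let H : SimpleGraph (Vtx P) :=
      { Adj := fun x y => x ∈ S ∧ y ∈ S ∧ G.Adj x y,
        symm := ⟨fun x y h => ⟨h.2.1, h.1, h.2.2.symm⟩⟩,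
        loopless := ⟨fun x h => G.loopless.irrefl x h.2.2⟩ }
    have hHle : H ≤ G := fun x y h => h.2.2
    have hmemB : partOf H ∈ B := by
      rw [hBeq]
      exact ⟨H, hHle, rfl⟩
    have hstay : ∀ (x y : Vtx P) (w : H.Walk x y), x ∈ S → y ∈ S := by
      intro x y w
      induction w with
      | nil => exact id
      | cons hadj p ih => intro _; exact ih hadj.2.1
    have hstay' : ∀ x y : Vtx P, (partOf H).r x y → x ∈ S → y ∈ S := by
      intro x y hr hx
      obtain ⟨w⟩ := (hr : H.Reachable x y)
      exact hstay x y w hx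
    obtain ⟨⟨a, haS⟩⟩ := hS.nonempty
    have hblk : cblock (partOf H) a = Subtype.val '' S := by
      ext z
      constructor
      · rintro ⟨b, hb, rfl⟩
        exact ⟨b, hstay' a b hb haS, rfl⟩
      · rintro ⟨b, hbS, rfl⟩
        refine ⟨b, ?_, rfl⟩
        have hre : (G.induce S).Reachable ⟨a, haS⟩ ⟨b, hbS⟩ := hS.preconnected _ _
        have hwalk : ∀ (x y : ↥S) (w : (G.induce S).Walk x y), H.Reachable ↑x ↑y := by
          intro x y w
          induction w with
          | nil => exact SimpleGraph.Reachable.refl _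
          | @cons x' z' y' hadj p ih =>
            exact (SimpleGraph.Adj.reachable (⟨x'.2, z'.2, hadj⟩ : H.Adj ↑x' ↑z')).trans ih
        obtain ⟨wseq⟩ := hre
        exact hwalk _ _ wseq
    have hnr : ¬ (partOf H).r a v := fun h => hvS (hstay' a v h haS)
    have hdisj := hBnc _ hmemB a v hnr
    exact Set.disjoint_left.1 hdisj
      (show (v : ℂ) ∈ convexHull ℝ (cblock (partOf H) a) by rw [hblk]; exact hv)
      (subset_convexHull ℝ _ ⟨v, (partOf H).refl' v, rfl⟩)
  exact ⟨G, ⟨⟨hconn, hacyc⟩, hENC, hCG⟩, hBeq⟩
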